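/- arXiv:2401.12903 — 7 statements merged into one kernel-verified Lean document; each statement's English description precedes it below -/
import Mathlib

section
/- For the pair-distinguishability task with classical encoding p_e(m|x) (probability distributions over messages m for each input x in [N]), the success metric S_C = 1 − (1/(N(N−1)))·∑_m ∑_{x<x'} min(p_e(m|x), p_e(m|x')) and the distinguishability D_C = (1/N)·∑_m max_x p_e(m|x) satisfy (N−1)(S_C − 1) + 1 ≤ D_C. -/
open Finset

lemma key_per_message (N : ℕ) (hN : 2 ≤ N) (f : Fin N → ℝ) (hf : ∀ x, 0 ≤ f x) :
    haveI : Nonempty (Fin N) := Fin.pos_iff_nonempty.mp (lt_of_lt_of_le two_pos hN)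
    ∑ x, f x ≤ Finset.univ.sup' Finset.univ_nonempty f +
      ∑ q ∈ Finset.univ.filter (fun q : Fin N × Fin N => q.1 < q.2),
        min (f q.1) (f q.2) := by
  haveI : Nonempty (Fin N) := Fin.pos_iff_nonempty.mp (by omega)
  obtain ⟨x₀, -, hx₀⟩ := Finset.exists_mem_eq_sup' Finset.univ_nonempty f
  have hmax : ∀ x, f x ≤ f x₀ := fun x => hx₀ ▸ Finset.le_sup' f (Finset.mem_univ x)
  set g : Fin N → Fin N × Fin N := fun x => if x < x₀ then (x, x₀) else (x₀, x) with hg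
  have hinj : Set.InjOn g (Finset.univ.erase x₀ : Finset (Fin N)) := by
    intro a ha b hb hab
    simp only [hg] at hab
    split_ifs at hab with h1 h2 h2 <;>
      simp only [Prod.mk.injEq] at hab <;> omega
  have himg : (Finset.univ.erase x₀).image g ⊆
      Finset.univ.filter (fun q : Fin N × Fin N => q.1 < q.2) := by
    intro q hq
    simp only [Finset.mem_image, Finset.mem_erase] at hq
    obtain ⟨x, ⟨hx, -⟩, rfl⟩ := hq
    simp only [hg, Finset.mem_filter, Finset.mem_univ, true_and]
    split_ifs with h
    · exact h
    · exact lt_of_le_of_ne (not_lt.mp h) (Ne.symm hx)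
  have hsum1 : ∑ x ∈ Finset.univ.erase x₀, f x =
      ∑ q ∈ (Finset.univ.erase x₀).image g, min (f q.1) (f q.2) := by
    rw [Finset.sum_image hinj]
    apply Finset.sum_congr rfl
    intro x hx
    simp only [hg]
    split_ifs with h
    · simp [min_eq_left (hmax x)]
    · simp [min_eq_right (hmax x)]
  have hle : ∑ q ∈ (Finset.univ.erase x₀).image g, min (f q.1) (f q.2) ≤
      ∑ q ∈ Finset.univ.filter (fun q : Fin N × Fin N => q.1 < q.2),
        min (f q.1) (f q.2) := by
    apply Finset.sum_le_sum_of_subset_of_nonneg himg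
    intro q _ _
    exact le_min (hf q.1) (hf q.2) |>.trans (min_le_min le_rfl le_rfl) |>.trans_eq rfl
  calc ∑ x, f x = f x₀ + ∑ x ∈ Finset.univ.erase x₀, f x :=
        (Finset.add_sum_erase _ f (Finset.mem_univ x₀)).symm
    _ ≤ Finset.univ.sup' Finset.univ_nonempty f +
        ∑ q ∈ Finset.univ.filter (fun q : Fin N × Fin N => q.1 < q.2),
          min (f q.1) (f q.2) := by
        rw [hsum1, hx₀]; exact add_le_add le_rfl hle

theorem pair_distinguishability_classical_bound
    (M : Type*) [Fintype M] (N : ℕ) (hN : 2 ≤ N)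
    (p : M → Fin N → ℝ) (hp : ∀ m x, 0 ≤ p m x)
    (hsum : ∀ x, ∑ m, p m x = 1)
    (S D : ℝ)
    (hS : S = 1 - (1 / (N * (N - 1))) *
      ∑ m, ∑ q ∈ Finset.univ.filter (fun q : Fin N × Fin N => q.1 < q.2),
        min (p m q.1) (p m q.2))
    (hD : haveI : Nonempty (Fin N) := Fin.pos_iff_nonempty.mp (by omega)
      D = (1 / N) * ∑ m, Finset.univ.sup' Finset.univ_nonempty (p m)) :
    (N - 1) * (S - 1) + 1 ≤ D := by
  haveI : Nonempty (Fin N) := Fin.pos_iff_nonempty.mp (by omega)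
  set T := ∑ m, ∑ q ∈ Finset.univ.filter (fun q : Fin N × Fin N => q.1 < q.2),
      min (p m q.1) (p m q.2) with hT
  set Mx := ∑ m, Finset.univ.sup' Finset.univ_nonempty (p m) with hMx
  have hkey : (N : ℝ) ≤ Mx + T := by
    have h1 : (N : ℝ) = ∑ m, ∑ x, p m x := by
      rw [Finset.sum_comm]
      simp [hsum, Finset.card_univ]
    rw [h1, hMx, hT, ← Finset.sum_add_distrib]
    exact Finset.sum_le_sum fun m _ => key_per_message N hN (p m) (hp m)
  have hN1 : (1:ℝ) ≤ (N:ℝ) - 1 := by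
    have : (2:ℝ) ≤ (N:ℝ) := by exact_mod_cast hN
    linarith
  have hNpos : (0:ℝ) < N := by linarith
  have hN1pos : (0:ℝ) < (N:ℝ) - 1 := by linarith
  rw [hS, hD]
  have hfrac : ((N:ℝ) - 1) * (1 / (N * ((N:ℝ) - 1))) = 1 / N := by
    field_simp
  have : ((N:ℝ) - 1) * ((1 - 1 / ((N:ℝ) * ((N:ℝ) - 1)) * T) - 1) + 1
      = 1 - (1/N) * T := by
    field_simp; ring
  rw [this]
  have : (1:ℝ) - (1/N) * T ≤ (1/N) * Mx := by
    rw [sub_le_iff_le_add, ← mul_add]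
    rw [div_mul_eq_mul_div, le_div_iff₀ hNpos]
    linarith [hkey]
  linarith [this]
end

section
/- Classical RAC bound: for any classical encoding of n-dit strings (d^n inputs) into messages, the RAC success metric S_C(n,d) and the distinguishability D_C = (1/d^n)·∑_m max_x p_e(m|x) satisfy n·S_C + 1 − n ≤ D_C, where S_C = (1/(n d^n))·∑_m ∑_{y=1}^n max_{v∈[d]} ∑_{x : x_y = v} p_e(m|x). -/
open Finset

theorem rac_classical_bound
    (n d : ℕ) (hn : 1 ≤ n) (hd : 2 ≤ d)
    (M : Type*) [Fintype M]
    (p : M → (Fin n → Fin d) → ℝ)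
    (hp : ∀ m x, 0 ≤ p m x) (hsum : ∀ x, ∑ m, p m x = 1)
    (S D : ℝ)
    (hS : haveI : Nonempty (Fin d) := Fin.pos_iff_nonempty.mp (by omega)
      S = (1 / (n * d ^ n : ℝ)) * ∑ m, ∑ y : Fin n,
        Finset.univ.sup' Finset.univ_nonempty
          (fun v : Fin d => ∑ x ∈ Finset.univ.filter (fun x : Fin n → Fin d => x y = v), p m x))
    (hD : haveI : Nonempty (Fin n → Fin d) := ⟨fun _ => ⟨0, by omega⟩⟩
      D = (1 / (d ^ n : ℝ)) * ∑ m, Finset.univ.sup' Finset.univ_nonempty (p m)) :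
    n * S + 1 - n ≤ D := by
  haveI hne : Nonempty (Fin d) := Fin.pos_iff_nonempty.mp (by omega)
  haveI : Nonempty (Fin n → Fin d) := ⟨fun _ => ⟨0, by omega⟩⟩
  have hchoice : ∀ (m : M) (y : Fin n), ∃ v : Fin d,
      Finset.univ.sup' Finset.univ_nonempty
        (fun v : Fin d => ∑ x ∈ Finset.univ.filter (fun x : Fin n → Fin d => x y = v), p m x)
      = ∑ x ∈ Finset.univ.filter (fun x : Fin n → Fin d => x y = v), p m x := by
    intro m y
    obtain ⟨v, _, hv⟩ := Finset.exists_mem_eq_sup' Finset.univ_nonempty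
      (fun v : Fin d => ∑ x ∈ Finset.univ.filter (fun x : Fin n → Fin d => x y = v), p m x)
    exact ⟨v, hv⟩
  choose v hv using hchoice
  -- key per-message bound
  have key : ∀ m : M,
      ∑ y : Fin n, ∑ x ∈ Finset.univ.filter (fun x : Fin n → Fin d => x y = v m y), p m x
      ≤ ((n : ℝ) - 1) * ∑ x : Fin n → Fin d, p m x
        + Finset.univ.sup' Finset.univ_nonempty (p m) := by
    intro m
    have swap : ∑ y : Fin n, ∑ x ∈ Finset.univ.filter (fun x : Fin n → Fin d => x y = v m y), p m x
        = ∑ x : Fin n → Fin d,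
            ((Finset.univ.filter (fun y : Fin n => x y = v m y)).card : ℝ) * p m x := by
      simp_rw [Finset.sum_filter]
      rw [Finset.sum_comm]
      refine Finset.sum_congr rfl (fun x _ => ?_)
      rw [← Finset.sum_filter, Finset.sum_const, nsmul_eq_mul]
    rw [swap]
    have hbound : ∀ x : Fin n → Fin d,
        ((Finset.univ.filter (fun y : Fin n => x y = v m y)).card : ℝ) * p m x
        ≤ ((n : ℝ) - 1) * p m x + (if x = v m then p m x else 0) := by
      intro x
      by_cases hx : x = v m
      · have hcard : (Finset.univ.filter (fun y : Fin n => x y = v m y)) = Finset.univ := by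
          refine Finset.eq_univ_of_forall (fun y => ?_)
          simp [hx]
        rw [hcard, if_pos hx]
        simp [Finset.card_univ]
        ring_nf
        simp
      · have hxe : ∃ y : Fin n, ¬ (x y = v m y) := by
          by_contra h
          push_neg at h
          exact hx (funext h)
        obtain ⟨y0, hy0⟩ := hxe
        have hcard : (Finset.univ.filter (fun y : Fin n => x y = v m y)).card ≤ n - 1 := by
          have hss : (Finset.univ.filter (fun y : Fin n => x y = v m y)) ⊆ Finset.univ.erase y0 := by
            intro y hy
            simp only [Finset.mem_filter, Finset.mem_univ, true_and] at hy
            refine Finset.mem_erase.mpr ⟨?_, Finset.mem_univ _⟩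
            rintro rfl; exact hy0 hy
          calc _ ≤ (Finset.univ.erase y0).card := Finset.card_le_card hss
            _ = n - 1 := by rw [Finset.card_erase_of_mem (Finset.mem_univ _)]; simp
        have hcR : ((Finset.univ.filter (fun y : Fin n => x y = v m y)).card : ℝ) ≤ (n : ℝ) - 1 := by
          have := Nat.cast_le (α := ℝ) |>.mpr hcard
          have hn1 : ((n - 1 : ℕ) : ℝ) = (n : ℝ) - 1 := by
            rw [Nat.cast_sub hn]; simp
          linarith [this, hn1.le]
        rw [if_neg hx, add_zero]
        exact mul_le_mul_of_nonneg_right hcR (hp m x)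
    calc ∑ x : Fin n → Fin d,
            ((Finset.univ.filter (fun y : Fin n => x y = v m y)).card : ℝ) * p m x
        ≤ ∑ x : Fin n → Fin d, (((n : ℝ) - 1) * p m x + (if x = v m then p m x else 0)) :=
          Finset.sum_le_sum (fun x _ => hbound x)
      _ = ((n : ℝ) - 1) * ∑ x : Fin n → Fin d, p m x + p m (v m) := by
          rw [Finset.sum_add_distrib, ← Finset.mul_sum, Finset.sum_ite_eq' Finset.univ (v m)]
          simp
      _ ≤ ((n : ℝ) - 1) * ∑ x : Fin n → Fin d, p m x
          + Finset.univ.sup' Finset.univ_nonempty (p m) := by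
          gcongr
          exact Finset.le_sup' (p m) (Finset.mem_univ (v m))
  -- total sums
  have htot : ∑ m, ∑ x : Fin n → Fin d, p m x = (d ^ n : ℝ) := by
    rw [Finset.sum_comm]
    simp [hsum, Finset.card_univ]
  have hA : ∑ m, ∑ y : Fin n,
      Finset.univ.sup' Finset.univ_nonempty
        (fun w : Fin d => ∑ x ∈ Finset.univ.filter (fun x : Fin n → Fin d => x y = w), p m x)
      ≤ ((n : ℝ) - 1) * (d ^ n : ℝ)
        + ∑ m, Finset.univ.sup' Finset.univ_nonempty (p m) := by
    calc ∑ m, ∑ y : Fin n,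
        Finset.univ.sup' Finset.univ_nonempty
          (fun w : Fin d => ∑ x ∈ Finset.univ.filter (fun x : Fin n → Fin d => x y = w), p m x)
        = ∑ m, ∑ y : Fin n,
            ∑ x ∈ Finset.univ.filter (fun x : Fin n → Fin d => x y = v m y), p m x := by
          refine Finset.sum_congr rfl (fun m _ => Finset.sum_congr rfl (fun y _ => hv m y))
      _ ≤ ∑ m, (((n : ℝ) - 1) * ∑ x : Fin n → Fin d, p m x
            + Finset.univ.sup' Finset.univ_nonempty (p m)) :=
          Finset.sum_le_sum (fun m _ => key m)
      _ = ((n : ℝ) - 1) * (d ^ n : ℝ)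
          + ∑ m, Finset.univ.sup' Finset.univ_nonempty (p m) := by
          rw [Finset.sum_add_distrib, ← Finset.mul_sum, htot]
  have hdpos : (0 : ℝ) < (d ^ n : ℝ) := by positivity
  have hnpos : (0 : ℝ) < (n : ℝ) := by exact_mod_cast hn
  have hnS : (n : ℝ) * S = (1 / (d ^ n : ℝ)) * ∑ m, ∑ y : Fin n,
      Finset.univ.sup' Finset.univ_nonempty
        (fun w : Fin d => ∑ x ∈ Finset.univ.filter (fun x : Fin n → Fin d => x y = w), p m x) := by
    rw [hS]; field_simp
  rw [hnS, hD]
  rw [div_mul_eq_mul_div, div_mul_eq_mul_div, one_mul, one_mul]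
  set A := ∑ m, ∑ y : Fin n,
      Finset.univ.sup' Finset.univ_nonempty
        (fun w : Fin d => ∑ x ∈ Finset.univ.filter (fun x : Fin n → Fin d => x y = w), p m x)
  set B := ∑ m, Finset.univ.sup' Finset.univ_nonempty (p m)
  rw [div_add' _ _ _ hdpos.ne', div_sub' hdpos.ne', div_le_div_iff₀ hdpos hdpos]
  nlinarith [hA, hdpos]
end

section
/- Key combinatorial lemma for the RAC bound: let f be a nonnegative function on strings x : Fin n → Fin d, and for each coordinate y let d*_y ∈ Fin d be arbitrary. Then ∑_{y} ∑_{x : x(y) = d*_y} f(x) ≤ f(x*) + (n−1)·∑_x f(x), where x* is the string with x*(y) = d*_y for all y. -/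
open Finset

theorem rac_combinatorial_lemma
    (n d : ℕ) (hn : 1 ≤ n) (hd : 1 ≤ d)
    (f : (Fin n → Fin d) → ℝ) (hf : ∀ x, 0 ≤ f x)
    (dstar : Fin n → Fin d) :
    ∑ y : Fin n, ∑ x ∈ Finset.univ.filter (fun x : Fin n → Fin d => x y = dstar y), f x
      ≤ f dstar + (n - 1 : ℝ) * ∑ x, f x := by
  have h1 : ∑ y : Fin n, ∑ x ∈ Finset.univ.filter (fun x : Fin n → Fin d => x y = dstar y), f x
      = ∑ x : Fin n → Fin d,
          ((Finset.univ.filter (fun y : Fin n => x y = dstar y)).card : ℝ) * f x := by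
    simp_rw [Finset.sum_filter]
    rw [Finset.sum_comm]
    congr 1
    ext x
    rw [← Finset.sum_filter, Finset.sum_const, nsmul_eq_mul]
  rw [h1]
  have h2 : ∑ x : Fin n → Fin d,
      ((Finset.univ.filter (fun y : Fin n => x y = dstar y)).card : ℝ) * f x
      ≤ ∑ x : Fin n → Fin d, (if x = dstar then (n : ℝ) else (n - 1 : ℝ)) * f x := by
    apply Finset.sum_le_sum
    intro x _
    apply mul_le_mul_of_nonneg_right _ (hf x)
    by_cases hx : x = dstar
    · simp [hx]
    · rw [if_neg hx]
      have hc : (Finset.univ.filter (fun y : Fin n => x y = dstar y)).card < n := by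
        have hne : Finset.univ.filter (fun y : Fin n => x y = dstar y) ≠ Finset.univ := by
          intro h
          apply hx
          funext y
          have := Finset.mem_filter.mp (h ▸ Finset.mem_univ y)
          exact this.2
        have := (Finset.filter_subset _ _).ssubset_of_ne hne
        simpa using Finset.card_lt_card this
      have : ((Finset.univ.filter (fun y : Fin n => x y = dstar y)).card : ℝ) ≤ (n : ℝ) - 1 := by
        have : (Finset.univ.filter (fun y : Fin n => x y = dstar y)).card + 1 ≤ n := hc
        have := Nat.cast_le (α := ℝ).mpr this
        push_cast at this
        linarith
      exact this
  refine h2.trans_eq ?_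
  rw [← Finset.add_sum_erase _ _ (Finset.mem_univ dstar),
      ← Finset.add_sum_erase _ f (Finset.mem_univ dstar)]
  rw [if_pos rfl]
  have hrest : ∑ x ∈ Finset.univ.erase dstar, (if x = dstar then (n : ℝ) else (n - 1 : ℝ)) * f x
      = ∑ x ∈ Finset.univ.erase dstar, (n - 1 : ℝ) * f x := by
    apply Finset.sum_congr rfl
    intro x hx
    rw [if_neg (Finset.ne_of_mem_erase hx)]
  rw [hrest, ← Finset.mul_sum]
  ring
end

section
/- Graph equality problem classical bound: for a finite simple graph G on N vertices with independence number α(G), any classical encoding satisfies (1/(N·α(G)))·((∑_x deg(x) + N)·(S_C − 1) + N) ≤ D_C, where S_C = 1 − (1/(∑_x deg(x)+N))·∑_m ∑_y min(p_e(m|y), ∑_{x ~ y} p_e(m|x)) and D_C = (1/N)·∑_m max_x p_e(m|x). -/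
open Finset

/-- The independence number of a finite simple graph: the maximum cardinality of a
set of pairwise nonadjacent vertices. -/
def indepNum {V : Type*} [Fintype V] [DecidableEq V] (G : SimpleGraph V) [DecidableRel G.Adj] : ℕ :=
  Finset.univ.powerset.sup fun s =>
    if ∀ x ∈ s, ∀ y ∈ s, ¬ G.Adj x y then s.card else 0

lemma card_le_indepNum {V : Type*} [Fintype V] [DecidableEq V] (G : SimpleGraph V)
    [DecidableRel G.Adj] (s : Finset V) (hs : ∀ x ∈ s, ∀ y ∈ s, ¬ G.Adj x y) :
    s.card ≤ indepNum G := by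
  have := Finset.le_sup (f := fun s => if ∀ x ∈ s, ∀ y ∈ s, ¬ G.Adj x y then s.card else 0)
    (Finset.mem_powerset.mpr (Finset.subset_univ s))
  simpa [indepNum, if_pos hs] using this

lemma key_bound (N : ℕ) (hN : 0 < N) (G : SimpleGraph (Fin N)) [DecidableRel G.Adj]
    (q : Fin N → ℝ) (hq : ∀ x, 0 ≤ q x) :
    haveI : Nonempty (Fin N) := Fin.pos_iff_nonempty.mp hN
    ∑ y, (q y - min (q y) (∑ x ∈ G.neighborFinset y, q x)) ≤
      (indepNum G : ℝ) * Finset.univ.sup' Finset.univ_nonempty q := by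
  haveI : Nonempty (Fin N) := Fin.pos_iff_nonempty.mp hN
  set Y := Finset.univ.filter (fun y => ∑ x ∈ G.neighborFinset y, q x < q y) with hY
  set Mx := Finset.univ.sup' Finset.univ_nonempty q with hMx
  have hmax : ∀ x, q x ≤ Mx := fun x => Finset.le_sup' q (Finset.mem_univ x)
  have hMx0 : 0 ≤ Mx := le_trans (hq (Classical.arbitrary _)) (hmax _)
  have hind : ∀ x ∈ Y, ∀ y ∈ Y, ¬ G.Adj x y := by
    intro a ha b hb hab
    rw [hY, Finset.mem_filter] at ha hb
    have h1 : q b ≤ ∑ x ∈ G.neighborFinset a, q x :=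
      Finset.single_le_sum (fun i _ => hq i)
        (by simpa [SimpleGraph.mem_neighborFinset] using hab)
    have h2 : q a ≤ ∑ x ∈ G.neighborFinset b, q x :=
      Finset.single_le_sum (fun i _ => hq i)
        (by simpa [SimpleGraph.mem_neighborFinset] using hab.symm)
    linarith [ha.2, hb.2]
  have hcard : (Y.card : ℝ) ≤ (indepNum G : ℝ) := by
    exact_mod_cast card_le_indepNum G Y hind
  have hsub : ∑ y, (q y - min (q y) (∑ x ∈ G.neighborFinset y, q x)) =
      ∑ y ∈ Y, (q y - min (q y) (∑ x ∈ G.neighborFinset y, q x)) := by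
    refine (Finset.sum_subset (Finset.subset_univ Y) ?_).symm
    intro y _ hy
    rw [hY, Finset.mem_filter] at hy
    push_neg at hy
    have : q y ≤ ∑ x ∈ G.neighborFinset y, q x := hy (Finset.mem_univ y)
    simp [min_eq_left this]
  rw [hsub]
  calc ∑ y ∈ Y, (q y - min (q y) (∑ x ∈ G.neighborFinset y, q x))
      ≤ ∑ _y ∈ Y, Mx := by
        refine Finset.sum_le_sum ?_
        intro y hy
        rw [hY, Finset.mem_filter] at hy
        have hs0 : 0 ≤ ∑ x ∈ G.neighborFinset y, q x :=
          Finset.sum_nonneg fun i _ => hq i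
        have := hmax y
        have : min (q y) (∑ x ∈ G.neighborFinset y, q x) =
            ∑ x ∈ G.neighborFinset y, q x := min_eq_right (le_of_lt hy.2)
        rw [this]
        linarith [hmax y]
    _ = (Y.card : ℝ) * Mx := by rw [Finset.sum_const, nsmul_eq_mul]
    _ ≤ (indepNum G : ℝ) * Mx := mul_le_mul_of_nonneg_right hcard hMx0

theorem graph_equality_classical_bound
    (N : ℕ) (hN : 0 < N) (G : SimpleGraph (Fin N)) [DecidableRel G.Adj]
    (M : Type*) [Fintype M]
    (p : M → Fin N → ℝ) (hp : ∀ m x, 0 ≤ p m x) (hsum : ∀ x, ∑ m, p m x = 1)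
    (S D : ℝ)
    (hS : S = 1 - (1 / ((∑ x, (G.degree x : ℝ)) + N)) *
      ∑ m, ∑ y, min (p m y) (∑ x ∈ G.neighborFinset y, p m x))
    (hD : haveI : Nonempty (Fin N) := Fin.pos_iff_nonempty.mp hN
      D = (1 / N) * ∑ m, Finset.univ.sup' Finset.univ_nonempty (p m)) :
    (1 / (N * (indepNum G : ℝ))) *
      (((∑ x, (G.degree x : ℝ)) + N) * (S - 1) + N) ≤ D := by
  haveI : Nonempty (Fin N) := Fin.pos_iff_nonempty.mp hN
  set T := ∑ m, ∑ y, min (p m y) (∑ x ∈ G.neighborFinset y, p m x) with hT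
  set Sd := ∑ x, (G.degree x : ℝ) with hSd
  have hSd0 : 0 ≤ Sd := Finset.sum_nonneg fun x _ => Nat.cast_nonneg _
  have hNpos : (0:ℝ) < N := by exact_mod_cast hN
  have hden : Sd + N ≠ 0 := by positivity
  have hS1 : (Sd + N) * (S - 1) = -T := by
    rw [hS]; field_simp; ring
  -- independence number is at least 1
  have hα1 : (1:ℝ) ≤ (indepNum G : ℝ) := by
    have : ({Classical.arbitrary (Fin N)} : Finset (Fin N)).card ≤ indepNum G :=
      card_le_indepNum G _ (by simp)
    simpa using (by exact_mod_cast this : (1:ℝ) ≤ (indepNum G : ℝ))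
  have hαpos : (0:ℝ) < (indepNum G : ℝ) := lt_of_lt_of_le one_pos hα1
  -- N = sum of all p
  have hNsum : (N : ℝ) = ∑ m, ∑ y, p m y := by
    rw [Finset.sum_comm]
    simp [hsum, Finset.card_univ]
  have hX : -T + N = ∑ m, ∑ y, (p m y - min (p m y) (∑ x ∈ G.neighborFinset y, p m x)) := by
    rw [hNsum, hT]
    simp only [Finset.sum_sub_distrib]
    ring
  set B := ∑ m, Finset.univ.sup' Finset.univ_nonempty (p m) with hB
  have hXB : -T + N ≤ (indepNum G : ℝ) * B := by
    rw [hX, hB, Finset.mul_sum]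
    exact Finset.sum_le_sum fun m _ => key_bound N hN G (p m) (hp m)
  have hB0 : 0 ≤ B :=
    Finset.sum_nonneg fun m _ =>
      le_trans (hp m (Classical.arbitrary _)) (Finset.le_sup' (p m) (Finset.mem_univ _))
  rw [hD, hS1]
  have h1 : (1 / (N * (indepNum G : ℝ))) * (-T + N) ≤
      (1 / (N * (indepNum G : ℝ))) * ((indepNum G : ℝ) * B) :=
    mul_le_mul_of_nonneg_left hXB (by positivity)
  calc (1 / (N * (indepNum G : ℝ))) * (-T + N) ≤
      (1 / (N * (indepNum G : ℝ))) * ((indepNum G : ℝ) * B) := h1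
    _ = (1 / N) * B := by
        field_simp
end

section
/- Key graph lemma: let G be a finite simple graph on vertex set V with independence number α, and f : V → ℝ nonnegative. Then ∑_y min(f(y), ∑_{x ~ y} f(x)) + α·max_v f(v) ≥ ∑_v f(v). -/
open Finset

theorem graph_key_lemma
    {V : Type*} [Fintype V] [DecidableEq V] [Nonempty V]
    (G : SimpleGraph V) [DecidableRel G.Adj]
    (f : V → ℝ) (hf : ∀ v, 0 ≤ f v) :
    (∑ y, min (f y) (∑ x ∈ G.neighborFinset y, f x)) +
      (indepNum G : ℝ) * Finset.univ.sup' Finset.univ_nonempty f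
      ≥ ∑ v, f v := by
  set M := Finset.univ.sup' Finset.univ_nonempty f with hMdef
  set S : V → ℝ := fun y => ∑ x ∈ G.neighborFinset y, f x with hSdef
  have hS0 : ∀ y, 0 ≤ S y := fun y => Finset.sum_nonneg fun i _ => hf i
  have hM0 : 0 ≤ M :=
    le_trans (hf (Classical.arbitrary V)) (Finset.le_sup' f (mem_univ _))
  have hfM : ∀ v, f v ≤ M := fun v => Finset.le_sup' f (mem_univ v)
  set A : Finset V := univ.filter (fun y => S y < f y) with hAdef
  have hindep : ∀ x ∈ A, ∀ y ∈ A, ¬ G.Adj x y := by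
    intro x hx y hy hadj
    rw [hAdef, Finset.mem_filter] at hx hy
    have h1 : f y ≤ S x :=
      Finset.single_le_sum (fun i _ => hf i)
        (by simpa [SimpleGraph.mem_neighborFinset] using hadj)
    have h2 : f x ≤ S y :=
      Finset.single_le_sum (fun i _ => hf i)
        (by simpa [SimpleGraph.mem_neighborFinset] using hadj.symm)
    linarith [hx.2, hy.2]
  have hcard : A.card ≤ indepNum G := by
    calc A.card = (if ∀ x ∈ A, ∀ y ∈ A, ¬ G.Adj x y then A.card else 0) :=
          (if_pos hindep).symm
      _ ≤ indepNum G :=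
          Finset.le_sup (f := fun s => if ∀ x ∈ s, ∀ y ∈ s, ¬ G.Adj x y then s.card else 0)
            (Finset.mem_powerset.mpr (Finset.subset_univ A))
  have hsplit : (∑ y, min (f y) (S y)) =
      (∑ y ∈ A, S y) + ∑ y ∈ univ.filter (fun y => ¬ S y < f y), f y := by
    rw [← Finset.sum_filter_add_sum_filter_not univ (fun y => S y < f y)]
    congr 1
    · exact Finset.sum_congr rfl fun y hy =>
        min_eq_right (le_of_lt (Finset.mem_filter.mp hy).2)
    · exact Finset.sum_congr rfl fun y hy =>
        min_eq_left (not_lt.mp (Finset.mem_filter.mp hy).2)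
  have hsum : (∑ v, f v) =
      (∑ y ∈ A, f y) + ∑ y ∈ univ.filter (fun y => ¬ S y < f y), f y := by
    rw [hAdef, Finset.sum_filter_add_sum_filter_not]
  have hAf : (∑ y ∈ A, f y) ≤ (indepNum G : ℝ) * M := by
    calc (∑ y ∈ A, f y) ≤ ∑ _y ∈ A, M := Finset.sum_le_sum fun i _ => hfM i
    _ = (A.card : ℝ) * M := by simp [mul_comm]
    _ ≤ (indepNum G : ℝ) * M := by
        apply mul_le_mul_of_nonneg_right _ hM0
        exact_mod_cast hcard
  have hAS : 0 ≤ ∑ y ∈ A, S y := Finset.sum_nonneg fun i _ => hS0 i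
  rw [ge_iff_le, hsum, hsplit]
  linarith
end

section
/- For odd N ≥ 5 the quantum advantage ratio for the N-cycle exceeds 1: (N/(N−1))·(1 − 2·sin²(π/(2N))) > 1. -/
open Real

theorem cycle_quantum_advantage_ratio_gt_one
    (N : ℕ) (hodd : Odd N) (hN : 5 ≤ N) :
    ((N : ℝ) / ((N : ℝ) - 1)) * (1 - 2 * Real.sin (π / (2 * N)) ^ 2) > 1 := by
  have hN5 : (5 : ℝ) ≤ (N : ℝ) := by exact_mod_cast hN
  have hNpos : (0 : ℝ) < N := by linarith
  have hx : (0 : ℝ) < π / (2 * N) := by positivity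
  have hsin : Real.sin (π / (2 * N)) < π / (2 * N) := Real.sin_lt hx
  have hsinpos : 0 ≤ Real.sin (π / (2 * N)) := by
    apply Real.sin_nonneg_of_nonneg_of_le_pi hx.le
    rw [div_le_iff₀ (by positivity)]
    nlinarith [Real.pi_pos]
  have hsq : Real.sin (π / (2 * N)) ^ 2 < (π / (2 * N)) ^ 2 := by
    nlinarith
  have hpi2 : π ^ 2 < 10 := by nlinarith [Real.pi_lt_d2, Real.pi_pos]
  have hkey : 2 * N * Real.sin (π / (2 * N)) ^ 2 < 1 := by
    have h2 : (π / (2 * N)) ^ 2 = π ^ 2 / (4 * N ^ 2) := by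
      field_simp; ring
    rw [h2] at hsq
    have : 2 * (N : ℝ) * (π ^ 2 / (4 * N ^ 2)) = π ^ 2 / (2 * N) := by
      field_simp; ring
    have hm := mul_lt_mul_of_pos_left hsq (by positivity : (0:ℝ) < 2 * N)
    rw [this] at hm
    have hlt : π ^ 2 / (2 * N) < 1 := by
      rw [div_lt_one (by positivity)]; linarith
    linarith
  rw [gt_iff_lt, ← sub_pos]
  have hden : (0 : ℝ) < (N : ℝ) - 1 := by linarith
  have : ((N : ℝ) / ((N : ℝ) - 1)) * (1 - 2 * Real.sin (π / (2 * N)) ^ 2) - 1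
      = (1 - 2 * N * Real.sin (π / (2 * N)) ^ 2) / ((N : ℝ) - 1) := by
    field_simp; ring
  rw [this]
  exact div_pos (by linarith) hden
end

section
/- Perfect classical success forces distinguishability at least 1/α: in the graph equality task, if S_C = 1 (i.e., for every message m and every vertex y, min(p_e(m|y), ∑_{x~y} p_e(m|x)) = 0), then D_C ≥ 1/α(G). -/
open Finset

theorem perfect_success_distinguishability_bound
    (N : ℕ) (hN : 0 < N) (G : SimpleGraph (Fin N)) [DecidableRel G.Adj]
    (M : Type*) [Fintype M]
    (p : M → Fin N → ℝ) (hp : ∀ m x, 0 ≤ p m x) (hsum : ∀ x, ∑ m, p m x = 1)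
    (hperfect : ∀ m y, min (p m y) (∑ x ∈ G.neighborFinset y, p m x) = 0) :
    haveI : Nonempty (Fin N) := Fin.pos_iff_nonempty.mp hN
    (1 / N : ℝ) * ∑ m, Finset.univ.sup' Finset.univ_nonempty (p m)
      ≥ 1 / (indepNum G : ℝ) := by
  haveI : Nonempty (Fin N) := Fin.pos_iff_nonempty.mp hN
  set α := indepNum G with hα
  have hα1 : 1 ≤ α := by
    obtain ⟨x⟩ := (inferInstance : Nonempty (Fin N))
    have := card_le_indepNum G {x} (by simp)
    simpa using this
  -- per-message bound
  have key : ∀ m : M, ∑ x, p m x ≤ (α : ℝ) * Finset.univ.sup' Finset.univ_nonempty (p m) := by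
    intro m
    set S : Finset (Fin N) := Finset.univ.filter (fun x => 0 < p m x) with hS
    have hind : ∀ x ∈ S, ∀ y ∈ S, ¬ G.Adj x y := by
      intro x hx y hy hadj
      have hxp : 0 < p m x := (Finset.mem_filter.mp hx).2
      have hyp : 0 < p m y := (Finset.mem_filter.mp hy).2
      have hxn : x ∈ G.neighborFinset y := by
        simp [SimpleGraph.mem_neighborFinset, hadj.symm]
      have hsum' : 0 < ∑ z ∈ G.neighborFinset y, p m z :=
        Finset.sum_pos' (fun z _ => hp m z) ⟨x, hxn, hxp⟩
      have := hperfect m y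
      rw [min_eq_iff] at this
      rcases this with ⟨h, _⟩ | ⟨h, _⟩ <;> linarith
    have hcard : S.card ≤ α := card_le_indepNum G S hind
    have hsup : ∀ x, p m x ≤ Finset.univ.sup' Finset.univ_nonempty (p m) :=
      fun x => Finset.le_sup' (p m) (Finset.mem_univ x)
    have hsupnn : 0 ≤ Finset.univ.sup' Finset.univ_nonempty (p m) := by
      obtain ⟨x⟩ := (inferInstance : Nonempty (Fin N))
      exact le_trans (hp m x) (hsup x)
    calc ∑ x, p m x = ∑ x ∈ S, p m x := by
          symm
          apply Finset.sum_subset (Finset.subset_univ S)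
          intro x _ hx
          have : ¬ 0 < p m x := by simpa [hS] using hx
          linarith [hp m x]
      _ ≤ ∑ x ∈ S, Finset.univ.sup' Finset.univ_nonempty (p m) :=
          Finset.sum_le_sum fun x _ => hsup x
      _ = (S.card : ℝ) * Finset.univ.sup' Finset.univ_nonempty (p m) := by
          rw [Finset.sum_const, nsmul_eq_mul]
      _ ≤ (α : ℝ) * Finset.univ.sup' Finset.univ_nonempty (p m) := by
          apply mul_le_mul_of_nonneg_right _ hsupnn
          exact_mod_cast hcard
  have htotal : (N : ℝ) ≤ (α : ℝ) * ∑ m, Finset.univ.sup' Finset.univ_nonempty (p m) := by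
    have h1 : ∑ m, ∑ x, p m x = (N : ℝ) := by
      rw [Finset.sum_comm]
      simp [hsum]
    calc (N : ℝ) = ∑ m, ∑ x, p m x := h1.symm
      _ ≤ ∑ m, (α : ℝ) * Finset.univ.sup' Finset.univ_nonempty (p m) :=
          Finset.sum_le_sum fun m _ => key m
      _ = (α : ℝ) * ∑ m, Finset.univ.sup' Finset.univ_nonempty (p m) := by
          rw [Finset.mul_sum]
  have hNpos : (0 : ℝ) < N := by exact_mod_cast hN
  have hαpos : (0 : ℝ) < α := by exact_mod_cast hα1
  rw [ge_iff_le, div_le_iff₀ hαpos, one_div, inv_mul_eq_div, div_mul_eq_mul_div,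
    le_div_iff₀ hNpos, one_mul]
  linarith [htotal]
end
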